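/- Let a, b, c be real numbers with 0 < a < b < c. Define the cubic polynomials N(y) = (y − a)(y − b)·( y/3 + ab/(3(a+b)) ) and P(y) = (y − b)(y − c)·( −y/3 − bc/(3(b+c)) ). Then N(b) = P(b) = 0 and the derivative-matching condition N'(b) = P'(b) holds if and only if a·c² + b·c² + a²·b + a²·c = a·b·c + b²·c + a·b² + b³. -/

import Mathlib

/-- C¹ gluing of successive cubic arcs for the second limit
nonlinear eigenfunction (`k = 1`, `l = 1`): with `0 < a < b < c`,
`N(y) = (y-a)(y-b)(y/3 + ab/(3(a+b)))` and
`P(y) = (y-b)(y-c)(-y/3 - bc/(3(b+c)))` satisfy `N(b) = P(b) = 0`, and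
`N'(b) = P'(b)` iff `ac² + bc² + a²b + a²c = abc + b²c + ab² + b³`. -/
theorem stmt16 (a b c : ℝ) (ha : 0 < a) (hab : a < b) (hbc : b < c) :
    let N : ℝ → ℝ := fun y => (y - a) * (y - b) * (y / 3 + a * b / (3 * (a + b)))
    let P : ℝ → ℝ := fun y => (y - b) * (y - c) * (-y / 3 - b * c / (3 * (b + c)))
    N b = 0 ∧ P b = 0 ∧
    (deriv N b = deriv P b ↔
      a * c ^ 2 + b * c ^ 2 + a ^ 2 * b + a ^ 2 * c
        = a * b * c + b ^ 2 * c + a * b ^ 2 + b ^ 3) := by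
  intro N P
  have hb0 : (0:ℝ) < b := lt_trans ha hab
  have hab0 : a + b ≠ 0 := by linarith
  have hbc0 : b + c ≠ 0 := by linarith
  have hN' : HasDerivAt N ((b - a) * (b / 3 + a * b / (3 * (a + b)))) b := by
    have h : HasDerivAt N
        ((1 * (b - b) + (b - a) * 1) * (b / 3 + a * b / (3 * (a + b)))
          + (b - a) * (b - b) * (1 / 3 + 0)) b := by
      exact (((hasDerivAt_id b).sub_const a).mul
        ((hasDerivAt_id b).sub_const b)).mul
        (((hasDerivAt_id b).div_const 3).add (hasDerivAt_const b _))
    convert h using 1; ring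
  have hP' : HasDerivAt P ((b - c) * (-b / 3 - b * c / (3 * (b + c)))) b := by
    have h : HasDerivAt P
        ((1 * (b - c) + (b - b) * 1) * (-b / 3 - b * c / (3 * (b + c)))
          + (b - b) * (b - c) * (-1 / 3 - 0)) b := by
      exact (((hasDerivAt_id b).sub_const b).mul
        ((hasDerivAt_id b).sub_const c)).mul
        ((((hasDerivAt_id b).neg).div_const 3).sub (hasDerivAt_const b _))
    convert h using 1; ring
  refine ⟨by simp [N], by simp [P], ?_⟩
  rw [hN'.deriv, hP'.deriv]
  constructor
  · intro h
    field_simp at h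
    have h2 : b * (a * c ^ 2 + b * c ^ 2 + a ^ 2 * b + a ^ 2 * c)
        = b * (a * b * c + b ^ 2 * c + a * b ^ 2 + b ^ 3) := by
      linear_combination (-b / 2) * h
    exact mul_left_cancel₀ (ne_of_gt hb0) h2
  · intro h
    field_simp
    linear_combination (-2) * h
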